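/- Let ε ∈ {1, −1} and let λ₁, λ₂ be real numbers with λ₁·λ₂ = −ε. Then for every real s such that C_ε(s) − λ₁·S_ε(s) ≠ 0 and C_ε(s) − λ₂·S_ε(s) ≠ 0, one has ((ε·S_ε(s) + λ₁·C_ε(s))/(C_ε(s) − λ₁·S_ε(s))) · ((ε·S_ε(s) + λ₂·C_ε(s))/(C_ε(s) − λ₂·S_ε(s))) = −ε. -/

import Mathlib

/-- `C_ε(s) = cos s` if `ε = 1`, `cosh s` if `ε = -1`. -/
noncomputable def Ceps (ε s : ℝ) : ℝ := if ε = 1 then Real.cos s else Real.cosh s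

/-- `S_ε(s) = sin s` if `ε = 1`, `sinh s` if `ε = -1`. -/
noncomputable def Seps (ε s : ℝ) : ℝ := if ε = 1 then Real.sin s else Real.sinh s

lemma CS_sq (ε : ℝ) (hε : ε = 1 ∨ ε = -1) (s : ℝ) :
    Ceps ε s ^ 2 + ε * Seps ε s ^ 2 = 1 := by
  rcases hε with h | h <;> subst h <;> simp only [Ceps, Seps] <;> norm_num <;> nlinarith [Real.sin_sq_add_cos_sq s, Real.cosh_sq_sub_sinh_sq s]

/-- If `l₁ l₂ = -ε`, the parallel principal curvatures also satisfy
`l₁^s l₂^s = -ε`. -/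
theorem parallel_curvatures_product (ε : ℝ) (hε : ε = 1 ∨ ε = -1)
    (l₁ l₂ : ℝ) (hc : l₁ * l₂ = -ε) (s : ℝ)
    (h₁ : Ceps ε s - l₁ * Seps ε s ≠ 0)
    (h₂ : Ceps ε s - l₂ * Seps ε s ≠ 0) :
    ((ε * Seps ε s + l₁ * Ceps ε s) / (Ceps ε s - l₁ * Seps ε s)) *
      ((ε * Seps ε s + l₂ * Ceps ε s) / (Ceps ε s - l₂ * Seps ε s)) = -ε := by
  have key := CS_sq ε hε s
  rw [div_mul_div_comm, div_eq_iff (mul_ne_zero h₁ h₂)]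
  nlinarith [key, hc, sq_nonneg (Ceps ε s), sq_nonneg (Seps ε s)]
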